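/- arXiv:2112.03804 — 7 statements merged into one kernel-verified Lean document; each statement's English description precedes it below -/
import Mathlib

section
/- Let H₁, H₂, R, C be finite nonempty index types, let μ₁ : H₁ → ℝ and μ₂ : H₂ → ℝ, let β > 0 be a real number, let incompat : H₁ → H₂ → Prop be a decidable predicate, and let γ : H₁ → H₂ → ℝ satisfy γ h₁ h₂ = 0 whenever incompat h₁ h₂ holds. Let F, S : Matrix R C ℝ. Define π h₁ h₂ := if incompat h₁ h₂ then 0 else μ₁ h₁ * μ₂ h₂ / β, define λᵢ hᵢ := μᵢ hᵢ / Real.sqrt β, let Λ₁ := Matrix.diagonal λ₁ and Λ₂ := Matrix.diagonal λ₂, let W : Matrix H₁ H₂ ℝ be W h₁ h₂ := γ h₁ h₂, let H× : Matrix H₁ H₂ ℝ be H× h₁ h₂ := if incompat h₁ h₂ then 1 else 0, and let Cmat := (Matrix.of (fun h₁ h₂ => λ₁ h₁ * λ₂ h₂)) - Λ₁ * H× * Λ₂. Then the block payoff matrix A : Matrix (H₁ × R) (H₂ × C) ℝ defined by A (h₁, r) (h₂, c) := π h₁ h₂ * (F r c + γ h₁ h₂ * S r c) satisfies A = Cmat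 ⊗ F + (Λ₁ * W * Λ₂) ⊗ S. -/
open Matrix Kronecker

/-- Proposition 1: Kronecker-product decomposition of the payoff matrix of a
poker river endgame. -/
theorem river_endgame_kronecker_decomposition
    {H₁ H₂ R C : Type*} [Fintype H₁] [Fintype H₂] [Fintype R] [Fintype C]
    [Nonempty H₁] [Nonempty H₂] [Nonempty R] [Nonempty C]
    [DecidableEq H₁] [DecidableEq H₂]
    (μ₁ : H₁ → ℝ) (μ₂ : H₂ → ℝ) (β : ℝ) (hβ : 0 < β)
    (incompat : H₁ → H₂ → Prop) [∀ h₁ h₂, Decidable (incompat h₁ h₂)]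
    (γ : H₁ → H₂ → ℝ) (hγ : ∀ h₁ h₂, incompat h₁ h₂ → γ h₁ h₂ = 0)
    (F S : Matrix R C ℝ)
    (π : H₁ → H₂ → ℝ)
    (hπ : ∀ h₁ h₂, π h₁ h₂ = if incompat h₁ h₂ then 0 else μ₁ h₁ * μ₂ h₂ / β)
    (lam₁ : H₁ → ℝ) (hlam₁ : ∀ h, lam₁ h = μ₁ h / Real.sqrt β)
    (lam₂ : H₂ → ℝ) (hlam₂ : ∀ h, lam₂ h = μ₂ h / Real.sqrt β)
    (W : Matrix H₁ H₂ ℝ) (hW : ∀ h₁ h₂, W h₁ h₂ = γ h₁ h₂)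
    (Hx : Matrix H₁ H₂ ℝ)
    (hHx : ∀ h₁ h₂, Hx h₁ h₂ = if incompat h₁ h₂ then 1 else 0)
    (Cmat : Matrix H₁ H₂ ℝ)
    (hCmat : Cmat = Matrix.of (fun h₁ h₂ => lam₁ h₁ * lam₂ h₂)
        - Matrix.diagonal lam₁ * Hx * Matrix.diagonal lam₂)
    (A : Matrix (H₁ × R) (H₂ × C) ℝ)
    (hA : ∀ h₁ r h₂ c, A (h₁, r) (h₂, c) = π h₁ h₂ * (F r c + γ h₁ h₂ * S r c)) :
    A = Cmat ⊗ₖ F + (Matrix.diagonal lam₁ * W * Matrix.diagonal lam₂) ⊗ₖ S := by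
  ext ⟨h₁, r⟩ ⟨h₂, c⟩
  have hd : ∀ (M : Matrix H₁ H₂ ℝ),
      (Matrix.diagonal lam₁ * M * Matrix.diagonal lam₂) h₁ h₂
        = lam₁ h₁ * M h₁ h₂ * lam₂ h₂ := by
    intro M
    rw [Matrix.mul_diagonal, Matrix.diagonal_mul]
  have hll : lam₁ h₁ * lam₂ h₂ = μ₁ h₁ * μ₂ h₂ / β := by
    rw [hlam₁, hlam₂]
    rw [div_mul_div_comm, Real.mul_self_sqrt hβ.le]
  simp only [hA, Matrix.add_apply, Matrix.kroneckerMap_apply, hCmat,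
    Matrix.sub_apply, Matrix.of_apply, hd, hW, hHx, hπ, hll]
  by_cases h : incompat h₁ h₂
  · simp [h, hγ h₁ h₂ h, hll]
  · simp [h]
    linear_combination (-(γ h₁ h₂ * S r c)) * hll
end

section
/- Let H₁, H₂, R, C be finite index types, let λ₁ : H₁ → ℝ and λ₂ : H₂ → ℝ, let Λ₁ := Matrix.diagonal λ₁ and Λ₂ := Matrix.diagonal λ₂, let H× : Matrix H₁ H₂ ℝ, let F : Matrix R C ℝ, and define Cmat := (Matrix.of (fun h₁ h₂ => λ₁ h₁ * λ₂ h₂)) - Λ₁ * H× * Λ₂. Regard λ₁ as the single-column matrix u : Matrix H₁ (Fin 1) ℝ, u h _ := λ₁ h, and λ₂ as v : Matrix H₂ (Fin 1) ℝ, v h _ := λ₂ h. Then Cmat ⊗ F = -((Λ₁ * H× * Λ₂) ⊗ F) + (u ⊗ (1 : Matrix R R ℝ)) * (v ⊗ Fᵀ)ᵀ, as matrices in Matrix (H₁ × R) (H₂ × C) ℝ (after the canonical reindexing identifying H₁ × (R × Fin 1) with H₁ × R via the product with Fin 1, i.e., identifying (Fin 1) × R with R and (Fin 1) × C with C in the Kronecker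 index types). -/
open Matrix Kronecker

/-- Equation (3): sparsification of the term C ⊗ F via the rank-one pull-out. -/
theorem cf_kronecker_sparsification
    {H₁ H₂ R C : Type*} [Fintype H₁] [Fintype H₂] [Fintype R] [Fintype C]
    [DecidableEq H₁] [DecidableEq H₂] [DecidableEq R]
    (lam₁ : H₁ → ℝ) (lam₂ : H₂ → ℝ)
    (Hx : Matrix H₁ H₂ ℝ) (F : Matrix R C ℝ)
    (Cmat : Matrix H₁ H₂ ℝ)
    (hCmat : Cmat = Matrix.of (fun h₁ h₂ => lam₁ h₁ * lam₂ h₂)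
        - Matrix.diagonal lam₁ * Hx * Matrix.diagonal lam₂)
    (u : Matrix H₁ (Fin 1) ℝ) (hu : ∀ h i, u h i = lam₁ h)
    (v : Matrix H₂ (Fin 1) ℝ) (hv : ∀ h i, v h i = lam₂ h) :
    Cmat ⊗ₖ F =
      -((Matrix.diagonal lam₁ * Hx * Matrix.diagonal lam₂) ⊗ₖ F)
        + (u ⊗ₖ (1 : Matrix R R ℝ)) * (v ⊗ₖ Fᵀ)ᵀ := by
  subst hCmat
  ext ⟨h₁, r⟩ ⟨h₂, c⟩
  simp [mul_apply, Fintype.sum_prod_type, kroneckerMap_apply, hu, hv, one_apply,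
    sub_mul, mul_comm, mul_left_comm]
  ring
end

section
/- Let H₁, H₂, R, C, K be finite index types, let λ₁ : H₁ → ℝ and λ₂ : H₂ → ℝ with Λ₁ := Matrix.diagonal λ₁ and Λ₂ := Matrix.diagonal λ₂, let F, S : Matrix R C ℝ, let H× : Matrix H₁ H₂ ℝ, define Cmat := (Matrix.of (fun h₁ h₂ => λ₁ h₁ * λ₂ h₂)) - Λ₁ * H× * Λ₂, let A := Cmat ⊗ F + (Λ₁ * W * Λ₂) ⊗ S for W : Matrix H₁ H₂ ℝ, and suppose W = Ŵ + U_W * V_Wᵀ for Ŵ : Matrix H₁ H₂ ℝ, U_W : Matrix H₁ K ℝ, V_W : Matrix H₂ K ℝ. Regard λ₁ as the single-column matrix u : Matrix H₁ (Fin 1) ℝ and λ₂ as v : Matrix H₂ (Fin 1) ℝ. Then, after the canonical reindexings of Kronecker index types, A = ((Λ₁ * Ŵ * Λ₂) ⊗ S − (Λ₁ * H× * Λ₂) ⊗ F) + ((Λ₁ * U_W) ⊗ (1 : Matrix R R ℝ)) * ((Λ₂ * V_W) ⊗ Sᵀ)ᵀ + (u ⊗ (1 : Matrix R R ℝ)) *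 (v ⊗ Fᵀ)ᵀ. -/
open Matrix Kronecker

/-- The full sparsification produced by Technique A. -/
theorem techniqueA_full_sparsification
    {H₁ H₂ R C K : Type*} [Fintype H₁] [Fintype H₂] [Fintype R] [Fintype C] [Fintype K]
    [DecidableEq H₁] [DecidableEq H₂] [DecidableEq R]
    (lam₁ : H₁ → ℝ) (lam₂ : H₂ → ℝ)
    (F S : Matrix R C ℝ) (Hx : Matrix H₁ H₂ ℝ)
    (Cmat : Matrix H₁ H₂ ℝ)
    (hCmat : Cmat = Matrix.of (fun h₁ h₂ => lam₁ h₁ * lam₂ h₂)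
        - Matrix.diagonal lam₁ * Hx * Matrix.diagonal lam₂)
    (W What : Matrix H₁ H₂ ℝ) (UW : Matrix H₁ K ℝ) (VW : Matrix H₂ K ℝ)
    (hW : W = What + UW * VWᵀ)
    (A : Matrix (H₁ × R) (H₂ × C) ℝ)
    (hA : A = Cmat ⊗ₖ F + (Matrix.diagonal lam₁ * W * Matrix.diagonal lam₂) ⊗ₖ S)
    (u : Matrix H₁ (Fin 1) ℝ) (hu : ∀ h i, u h i = lam₁ h)
    (v : Matrix H₂ (Fin 1) ℝ) (hv : ∀ h i, v h i = lam₂ h) :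
    A = ((Matrix.diagonal lam₁ * What * Matrix.diagonal lam₂) ⊗ₖ S
            - (Matrix.diagonal lam₁ * Hx * Matrix.diagonal lam₂) ⊗ₖ F)
        + ((Matrix.diagonal lam₁ * UW) ⊗ₖ (1 : Matrix R R ℝ))
            * ((Matrix.diagonal lam₂ * VW) ⊗ₖ Sᵀ)ᵀ
        + (u ⊗ₖ (1 : Matrix R R ℝ)) * (v ⊗ₖ Fᵀ)ᵀ := by
  subst hCmat hW hA
  ext ⟨h₁, r⟩ ⟨h₂, c⟩
  simp [Matrix.mul_apply, Matrix.kroneckerMap_apply, Matrix.diagonal, hu, hv,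
    Fintype.sum_prod_type, Matrix.mul_apply, Finset.mul_sum, Finset.sum_mul,
    Finset.sum_ite_eq, Finset.sum_ite_eq', Matrix.one_apply, mul_ite, ite_mul,
    add_mul, mul_add, sub_mul, Finset.sum_add_distrib]
  have h1 : (∑ i : K, lam₁ h₁ * (UW h₁ i * VW h₂ i) * lam₂ h₂ * S r c)
      = ∑ x : K, lam₁ h₁ * UW h₁ x * (lam₂ h₂ * VW h₂ x * S r c) :=
    Finset.sum_congr rfl fun x _ => by ring
  rw [h1]; ring
end

section
/- Fix n ∈ ℕ with n ≥ 1, let H₂, R, C be finite index types, let λ₁ : Fin n → ℝ and λ₂ : H₂ → ℝ with Λ₁ := Matrix.diagonal λ₁ and Λ₂ := Matrix.diagonal λ₂, let W : Matrix (Fin n) H₂ ℝ and S : Matrix R C ℝ. Let D : Matrix (Fin n) (Fin n) ℝ be D i j := if i = j then 1 else if (j : ℕ) + 1 = (i : ℕ) then −1 else 0, and define Y := D * W. Then (Λ₁ * W * Λ₂) ⊗ S = (Λ₁ ⊗ (1 : Matrix R R ℝ)) * (D ⊗ (1 : Matrix R R ℝ))⁻¹ * ((Λ₂ * Yᵀ)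 ⊗ Sᵀ)ᵀ, as matrices in Matrix (Fin n × R) (H₂ × C) ℝ, where the inverse is Mathlib's Matrix.inv (the matrix D ⊗ 1 is nonsingular since det D = 1). -/
open Matrix Kronecker

/-- Equation (5): core identity of sparsification Technique B. -/
theorem techniqueB_showdown_sparsification
    (n : ℕ) (hn : 1 ≤ n)
    {H₂ R C : Type*} [Fintype H₂] [Fintype R] [Fintype C]
    [DecidableEq H₂] [DecidableEq R]
    (lam₁ : Fin n → ℝ) (lam₂ : H₂ → ℝ)
    (W : Matrix (Fin n) H₂ ℝ) (S : Matrix R C ℝ)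
    (D : Matrix (Fin n) (Fin n) ℝ)
    (hD : ∀ i j, D i j = if i = j then 1 else if (j : ℕ) + 1 = (i : ℕ) then -1 else 0)
    (Y : Matrix (Fin n) H₂ ℝ) (hY : Y = D * W) :
    (Matrix.diagonal lam₁ * W * Matrix.diagonal lam₂) ⊗ₖ S =
      (Matrix.diagonal lam₁ ⊗ₖ (1 : Matrix R R ℝ))
        * (D ⊗ₖ (1 : Matrix R R ℝ))⁻¹
        * ((Matrix.diagonal lam₂ * Yᵀ) ⊗ₖ Sᵀ)ᵀ := by
  subst hY
  have hdet : D.det = 1 := by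
    have htri : D.BlockTriangular OrderDual.toDual := by
      intro i j hij
      rw [hD]
      have h' : (i : ℕ) < (j : ℕ) := hij
      rw [if_neg (by omega : ¬ (j:ℕ) + 1 = (i:ℕ))] <;>
        rw [if_neg (by exact fun h => by omega : ¬ i = j)]
    rw [Matrix.det_of_lowerTriangular D htri]
    have : ∀ i, D i i = 1 := fun i => by rw [hD]; simp
    simp [this]
  have hunit : IsUnit D.det := by rw [hdet]; exact isUnit_one
  have hinv : D⁻¹ * D = 1 := Matrix.nonsing_inv_mul D hunit
  rw [Matrix.inv_kronecker, inv_one,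
    ← Matrix.kroneckerMap_transpose, Matrix.transpose_mul, Matrix.transpose_transpose,
    Matrix.diagonal_transpose, Matrix.transpose_transpose,
    ← Matrix.mul_kronecker_mul, ← Matrix.mul_kronecker_mul]
  rw [Matrix.mul_assoc (Matrix.diagonal lam₁), Matrix.mul_assoc D W,
    Matrix.mul_assoc (Matrix.diagonal lam₁) D⁻¹, ← Matrix.mul_assoc D⁻¹ D, hinv,
    Matrix.one_mul, Matrix.one_mul, Matrix.one_mul]
end

section
/- Fix n ∈ ℕ with n ≥ 1, let H₂, R, C be finite index types, let λ₁ : Fin n → ℝ and λ₂ : H₂ → ℝ with Λ₁ := Matrix.diagonal λ₁ and Λ₂ := Matrix.diagonal λ₂, let F, S : Matrix R C ℝ, let H× : Matrix (Fin n) H₂ ℝ, define Cmat := (Matrix.of (fun h₁ h₂ => λ₁ h₁ * λ₂ h₂)) - Λ₁ * H× * Λ₂, let W : Matrix (Fin n) H₂ ℝ, and set A := Cmat ⊗ F + (Λ₁ * W * Λ₂) ⊗ S. Let D : Matrix (Fin n) (Fin n) ℝ be D i j := if i = j then 1 else if (j : ℕ) + 1 = (i : ℕ) then −1 else 0 and Y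 := D * W. Regard λ₁ as the single-column matrix u : Matrix (Fin n) (Fin 1) ℝ and λ₂ as v : Matrix H₂ (Fin 1) ℝ. Then, after the canonical reindexings of Kronecker index types, A = −((Λ₁ * H× * Λ₂) ⊗ F) + (Λ₁ ⊗ (1 : Matrix R R ℝ)) * (D ⊗ (1 : Matrix R R ℝ))⁻¹ * ((Λ₂ * Yᵀ) ⊗ Sᵀ)ᵀ + (u ⊗ (1 : Matrix R R ℝ)) * (v ⊗ Fᵀ)ᵀ. -/
open Matrix Kronecker

/-- The full sparsification produced by Technique B. -/
theorem techniqueB_full_sparsification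
    (n : ℕ) (hn : 1 ≤ n)
    {H₂ R C : Type*} [Fintype H₂] [Fintype R] [Fintype C]
    [DecidableEq H₂] [DecidableEq R]
    (lam₁ : Fin n → ℝ) (lam₂ : H₂ → ℝ)
    (F S : Matrix R C ℝ) (Hx : Matrix (Fin n) H₂ ℝ)
    (Cmat : Matrix (Fin n) H₂ ℝ)
    (hCmat : Cmat = Matrix.of (fun h₁ h₂ => lam₁ h₁ * lam₂ h₂)
        - Matrix.diagonal lam₁ * Hx * Matrix.diagonal lam₂)
    (W : Matrix (Fin n) H₂ ℝ)
    (A : Matrix (Fin n × R) (H₂ × C) ℝ)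
    (hA : A = Cmat ⊗ₖ F + (Matrix.diagonal lam₁ * W * Matrix.diagonal lam₂) ⊗ₖ S)
    (D : Matrix (Fin n) (Fin n) ℝ)
    (hD : ∀ i j, D i j = if i = j then 1 else if (j : ℕ) + 1 = (i : ℕ) then -1 else 0)
    (Y : Matrix (Fin n) H₂ ℝ) (hY : Y = D * W)
    (u : Matrix (Fin n) (Fin 1) ℝ) (hu : ∀ h i, u h i = lam₁ h)
    (v : Matrix H₂ (Fin 1) ℝ) (hv : ∀ h i, v h i = lam₂ h) :
    A = -((Matrix.diagonal lam₁ * Hx * Matrix.diagonal lam₂) ⊗ₖ F)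
        + (Matrix.diagonal lam₁ ⊗ₖ (1 : Matrix R R ℝ))
            * (D ⊗ₖ (1 : Matrix R R ℝ))⁻¹
            * ((Matrix.diagonal lam₂ * Yᵀ) ⊗ₖ Sᵀ)ᵀ
        + (u ⊗ₖ (1 : Matrix R R ℝ)) * (v ⊗ₖ Fᵀ)ᵀ := by

  -- D is lower triangular with unit diagonal, hence invertible
  have hDtri : D.BlockTriangular OrderDual.toDual := by
    intro i j hij
    have hij' : i < j := hij
    rw [hD]
    have h1 : i ≠ j := ne_of_lt hij'
    have h2 : (j : ℕ) + 1 ≠ (i : ℕ) := by omega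
    simp [h1, h2]
  have hDdet : D.det = 1 := by
    rw [Matrix.det_of_lowerTriangular D hDtri]
    have : ∀ i, D i i = 1 := fun i => by rw [hD]; simp
    simp [this]
  have hDunit : IsUnit D.det := by rw [hDdet]; exact isUnit_one
  have hsub : ∀ (P Q : Matrix (Fin n) H₂ ℝ), (P - Q) ⊗ₖ F = P ⊗ₖ F - Q ⊗ₖ F := by
    intro P Q
    ext ⟨a,b⟩ ⟨c,d⟩
    simp [Matrix.kroneckerMap_apply, sub_mul]
  -- middle term
  have hmid : (Matrix.diagonal lam₁ ⊗ₖ (1 : Matrix R R ℝ))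
      * (D ⊗ₖ (1 : Matrix R R ℝ))⁻¹
      * ((Matrix.diagonal lam₂ * Yᵀ) ⊗ₖ Sᵀ)ᵀ
      = (Matrix.diagonal lam₁ * W * Matrix.diagonal lam₂) ⊗ₖ S := by
    rw [Matrix.inv_kronecker, inv_one,
      ← Matrix.kroneckerMap_transpose, Matrix.transpose_mul, Matrix.transpose_transpose,
      Matrix.transpose_transpose, Matrix.diagonal_transpose,
      ← Matrix.mul_kronecker_mul, ← Matrix.mul_kronecker_mul]
    simp only [Matrix.one_mul]
    rw [hY, Matrix.mul_assoc D, Matrix.mul_assoc (Matrix.diagonal lam₁) D⁻¹,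
      ← Matrix.mul_assoc D⁻¹, Matrix.nonsing_inv_mul D hDunit, Matrix.one_mul,
      ← Matrix.mul_assoc]
  -- last term
  have hlast : (u ⊗ₖ (1 : Matrix R R ℝ)) * (v ⊗ₖ Fᵀ)ᵀ
      = (Matrix.of (fun h₁ h₂ => lam₁ h₁ * lam₂ h₂) : Matrix (Fin n) H₂ ℝ) ⊗ₖ F := by
    rw [← Matrix.kroneckerMap_transpose, Matrix.transpose_transpose,
      ← Matrix.mul_kronecker_mul, Matrix.one_mul]
    have huv : u * vᵀ = (Matrix.of (fun h₁ h₂ => lam₁ h₁ * lam₂ h₂) : Matrix (Fin n) H₂ ℝ) := by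
      ext i j
      simp [Matrix.mul_apply, hu, hv]
    rw [huv]
  rw [hA, hCmat, hsub, hmid, hlast]
  abel
end

section
/- Let m, p, q, k be finite index types, let A, Â : Matrix m p ℝ, U : Matrix m k ℝ, M : Matrix k k ℝ, V : Matrix p k ℝ, and let F₂ : Matrix q p ℝ. Suppose M is invertible (IsUnit M.det) and A = Â + U * M⁻¹ * Vᵀ. Then for all vectors x : m → ℝ and v : q → ℝ, the following are equivalent: (i) for every i : p, (Aᵀ.mulVec x − F₂ᵀ.mulVec v) i ≥ 0; (ii) there exists w : k → ℝ such that Uᵀ.mulVec x = Mᵀ.mulVec w and for every i : p, (Âᵀ.mulVec x − F₂ᵀ.mulVec v + V.mulVec w) i ≥ 0. -/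
open Matrix

/-- Equivalence of the dense LP constraint Aᵀx − F₂ᵀv ≥ 0 with its sparsified
reformulation (equation (2)). -/
theorem sparsified_lp_constraint_equivalence
    {m p q k : Type*} [Fintype m] [Fintype p] [Fintype q] [Fintype k]
    [DecidableEq k]
    (A Ahat : Matrix m p ℝ) (U : Matrix m k ℝ) (M : Matrix k k ℝ)
    (V : Matrix p k ℝ) (F₂ : Matrix q p ℝ)
    (hM : IsUnit M.det) (hA : A = Ahat + U * M⁻¹ * Vᵀ)
    (x : m → ℝ) (v : q → ℝ) :
    (∀ i, 0 ≤ (Aᵀ.mulVec x - F₂ᵀ.mulVec v) i) ↔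
      ∃ w : k → ℝ, Uᵀ.mulVec x = Mᵀ.mulVec w ∧
        ∀ i, 0 ≤ (Ahatᵀ.mulVec x - F₂ᵀ.mulVec v + V.mulVec w) i := by
  have hinv : M * M⁻¹ = 1 := Matrix.mul_nonsing_inv M hM
  have hinv' : M⁻¹ * M = 1 := Matrix.nonsing_inv_mul M hM
  have hAT : Aᵀ = Ahatᵀ + V * (M⁻¹)ᵀ * Uᵀ := by
    rw [hA]; simp [Matrix.transpose_add, Matrix.transpose_mul, Matrix.mul_assoc]
  constructor
  · intro h
    refine ⟨(M⁻¹)ᵀ.mulVec (Uᵀ.mulVec x), ?_, ?_⟩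
    · rw [Matrix.mulVec_mulVec, ← Matrix.transpose_mul, hinv', Matrix.transpose_one,
        Matrix.one_mulVec]
    · intro i
      have := h i
      rw [hAT] at this
      simpa [Matrix.add_mulVec, Matrix.mulVec_mulVec, Matrix.mul_assoc,
        sub_add_eq_add_sub, add_sub_assoc, add_comm] using this
  · rintro ⟨w, hw, h⟩
    intro i
    have := h i
    have hVw : V.mulVec w = (V * (M⁻¹)ᵀ * Uᵀ).mulVec x := by
      rw [← Matrix.mulVec_mulVec, hw, Matrix.mulVec_mulVec, Matrix.mul_assoc,
        ← Matrix.transpose_mul, hinv, Matrix.transpose_one, Matrix.mul_one]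
    rw [hVw] at this
    rw [hAT]
    simpa [Matrix.add_mulVec, sub_add_eq_add_sub, add_sub_assoc, add_comm] using this
end

section
/- Fix n ∈ ℕ with n ≥ 1, let H₂ be a finite index type, let s₁ : Fin n → ℝ be monotone (i < i' implies s₁ i ≤ s₁ i'), let s₂ : H₂ → ℝ, and define W : Matrix (Fin n) H₂ ℝ by W i h := Real.sign (s₁ i − s₂ h). Then for every h : H₂, the number of indices i : Fin n with (i : ℕ) ≥ 1 at which the row-difference is nonzero, i.e., the cardinality of { i : Fin n | 1 ≤ (i : ℕ) ∧ W i h ≠ W (i − 1) h } (where i − 1 denotes the index with value (i : ℕ) − 1), is at most 2. -/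
open Matrix

lemma sign_mem_aux (x : ℝ) : Real.sign x = -1 ∨ Real.sign x = 0 ∨ Real.sign x = 1 := by
  rcases lt_trichotomy x 0 with h | h | h
  · exact Or.inl (Real.sign_of_neg h)
  · subst h; exact Or.inr (Or.inl Real.sign_zero)
  · exact Or.inr (Or.inr (Real.sign_of_pos h))

lemma sign_mono_aux {x y : ℝ} (h : x ≤ y) : Real.sign x ≤ Real.sign y := by
  rcases lt_trichotomy x 0 with hx | hx | hx
  · rw [Real.sign_of_neg hx]
    rcases sign_mem_aux y with hy | hy | hy <;> rw [hy] <;> norm_num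
  · subst hx
    rw [Real.sign_zero]
    rcases lt_or_eq_of_le h with hy | hy
    · rw [Real.sign_of_pos hy]; norm_num
    · rw [← hy, Real.sign_zero]
  · rw [Real.sign_of_pos hx, Real.sign_of_pos (lt_of_lt_of_le hx h)]

/-- With the row player's hands sorted by strength, each column of the win-lose
matrix W changes value at most twice down the rows. -/
theorem winlose_matrix_column_changes_at_most_twice
    (n : ℕ) (hn : 1 ≤ n)
    {H₂ : Type*} [Fintype H₂]
    (s₁ : Fin n → ℝ) (hmono : ∀ i i' : Fin n, i < i' → s₁ i ≤ s₁ i')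
    (s₂ : H₂ → ℝ)
    (W : Matrix (Fin n) H₂ ℝ)
    (hW : ∀ i h, W i h = Real.sign (s₁ i - s₂ h)) :
    ∀ h : H₂,
      (Finset.univ.filter (fun i : Fin n =>
        1 ≤ (i : ℕ) ∧
          W i h ≠ W ⟨(i : ℕ) - 1, Nat.lt_of_le_of_lt (Nat.sub_le _ _) i.isLt⟩ h)).card
        ≤ 2 := by
  intro h
  set S := (Finset.univ.filter (fun i : Fin n =>
        1 ≤ (i : ℕ) ∧
          W i h ≠ W ⟨(i : ℕ) - 1, Nat.lt_of_le_of_lt (Nat.sub_le _ _) i.isLt⟩ h)) with hS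
  have hf : ∀ i j : Fin n, i ≤ j → W i h ≤ W j h := by
    intro i j hij
    rw [hW, hW]
    rcases lt_or_eq_of_le hij with hij | hij
    · exact sign_mono_aux (by linarith [hmono i j hij])
    · rw [hij]
  have hmem3 : ∀ i : Fin n, W i h = -1 ∨ W i h = 0 ∨ W i h = 1 := by
    intro i; rw [hW]; exact sign_mem_aux _
  -- at a change point, the value strictly increases
  have hstrict : ∀ i : Fin n, i ∈ S →
      W ⟨(i : ℕ) - 1, Nat.lt_of_le_of_lt (Nat.sub_le _ _) i.isLt⟩ h < W i h := by
    intro i hi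
    rw [hS, Finset.mem_filter] at hi
    obtain ⟨-, h1, hne⟩ := hi
    exact lt_of_le_of_ne (hf _ _ (by simp [Fin.le_def])) (fun e => hne e.symm)
  have key : ∀ i j : Fin n, i ∈ S → j ∈ S → i < j → W i h ≠ W j h := by
    intro i j hi hj hlt
    have hj1 : 1 ≤ (j : ℕ) := by
      rw [hS, Finset.mem_filter] at hj; exact hj.2.1
    have hle : W i h ≤ W ⟨(j : ℕ) - 1, Nat.lt_of_le_of_lt (Nat.sub_le _ _) j.isLt⟩ h := by
      apply hf
      rw [Fin.le_def]
      simp only []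
      show (i : ℕ) ≤ (j : ℕ) - 1
      have := Fin.lt_def.mp hlt
      omega
    exact ne_of_lt (lt_of_le_of_lt hle (hstrict j hj))
  have := Finset.card_le_card_of_injOn (fun i : Fin n => W i h)
    (t := ({0, 1} : Finset ℝ))
    (by
      intro i hi
      have hlt := hstrict i (by simpa using hi)
      have hgt : -1 < W i h := by
        rcases hmem3 ⟨(i : ℕ) - 1, Nat.lt_of_le_of_lt (Nat.sub_le _ _) i.isLt⟩ with e | e | e <;>
          rw [e] at hlt <;> linarith
      rcases hmem3 i with e | e | e
      · rw [e] at hgt; linarith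
      · simp [e]
      · simp [e])
    (by
      intro i hi j hj heq
      rcases lt_trichotomy i j with h' | h' | h'
      · exact absurd heq (key i j (by simpa using hi) (by simpa using hj) h')
      · exact h'
      · exact absurd heq.symm (key j i (by simpa using hj) (by simpa using hi) h'))
  refine this.trans ?_
  have : ({0, 1} : Finset ℝ).card ≤ 2 := by
    apply le_trans (Finset.card_insert_le _ _)
    simp
  exact this
end
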